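/- Let A be a torsion-free abelian group and x an automorphism of A of finite order r such that for every a ∈ A there exists s with [a,_s x] = 1. Then x is the identity automorphism. (Combination of Casolo's lemma with torsion-freeness.) -/

import Mathlib

/-- Iterated commutator `[a,_n x]` of an element `a` of an abelian group with an
automorphism `x`, where `[a, x] = a⁻¹ * x a`. -/
def autEngel {A : Type*} [CommGroup A] (x : MulAut A) (a : A) : ℕ → A
  | 0 => a
  | n + 1 => (autEngel x a n)⁻¹ * x (autEngel x a n)

lemma autEngel_shift {A : Type*} [CommGroup A] (x : MulAut A) (a : A) (n : ℕ) :
    autEngel x a (n + 1) = autEngel x (a⁻¹ * x a) n := by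
  induction n with
  | zero => rfl
  | succ n ih =>
    show (autEngel x a (n + 1))⁻¹ * x (autEngel x a (n + 1)) = _
    rw [ih]; rfl

lemma autEngel_pow {A : Type*} [CommGroup A] (x : MulAut A) (a : A) (m n : ℕ) :
    autEngel x (a ^ m) n = (autEngel x a n) ^ m := by
  induction n with
  | zero => rfl
  | succ n ih => simp only [autEngel, ih, inv_pow, map_pow, mul_pow]

lemma autEngel_key {A : Type*} [CommGroup A] (x : MulAut A) (r : ℕ)
    (hx : x ^ r = 1) (a : A) (hc : x (a⁻¹ * x a) = a⁻¹ * x a) :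
    (a⁻¹ * x a) ^ r = 1 := by
  set c := a⁻¹ * x a with hcdef
  have hk : ∀ k : ℕ, (x ^ k) a = a * c ^ k := by
    intro k
    induction k with
    | zero => simp
    | succ k ih =>
      have hx1 : (x ^ (k + 1)) a = x ((x ^ k) a) := by
        rw [pow_succ', MulAut.mul_apply]
      have hac : a * c = x a := by rw [hcdef, mul_inv_cancel_left]
      rw [hx1, ih, map_mul, map_pow, hc, ← hac, pow_succ, mul_assoc, mul_comm c]
  have h1 := hk r
  rw [hx] at h1
  simp only [MulAut.one_apply] at h1
  have : a * c ^ r = a * 1 := by rw [← h1, mul_one]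
  exact mul_left_cancel this

lemma autEngel_main {A : Type*} [CommGroup A] (x : MulAut A) (r : ℕ)
    (hx : x ^ r = 1) :
    ∀ s : ℕ, ∀ b : A, autEngel x b (s + 1) = 1 → (b⁻¹ * x b) ^ (r ^ s) = 1 := by
  intro s
  induction s with
  | zero => intro b hb; simpa [autEngel] using hb
  | succ s ih =>
    intro b hb
    set c := b⁻¹ * x b with hcdef
    have h1 : autEngel x c (s + 1) = 1 := by
      rw [← autEngel_shift]; exact hb
    have h2 : (c⁻¹ * x c) ^ (r ^ s) = 1 := ih c h1
    -- apply key lemma to b' = b ^ (r ^ s)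
    have hc' : (b ^ (r ^ s))⁻¹ * x (b ^ (r ^ s)) = c ^ (r ^ s) := by
      rw [map_pow, ← inv_pow, ← mul_pow, hcdef]
    have hfix : x ((b ^ (r ^ s))⁻¹ * x (b ^ (r ^ s))) =
        (b ^ (r ^ s))⁻¹ * x (b ^ (r ^ s)) := by
      rw [hc']
      have h4 : (c ^ (r ^ s))⁻¹ * x (c ^ (r ^ s)) = 1 := by
        rw [map_pow, ← inv_pow, ← mul_pow]; exact h2
      exact (inv_mul_eq_one.mp h4).symm
    have := autEngel_key x r hx (b ^ (r ^ s)) hfix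
    rw [hc', ← pow_mul, ← pow_succ] at this
    exact this

/-- If `A` is torsion-free abelian and `x` is an automorphism of finite order `r` such
that every element of `A` is annihilated by some iterated commutator with `x`, then `x`
is the identity automorphism. -/
theorem stmt19 {A : Type*} [CommGroup A]
    (htf : ∀ a : A, ∀ n : ℕ, 0 < n → a ^ n = 1 → a = 1)
    (x : MulAut A) (r : ℕ) (hr : orderOf x = r) (hrpos : 0 < r)
    (hengel : ∀ a : A, ∃ s : ℕ, 1 ≤ s ∧ autEngel x a s = 1) :
    ∀ a : A, x a = a := by
  have hx : x ^ r = 1 := by rw [← hr]; exact pow_orderOf_eq_one x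
  intro a
  obtain ⟨s, hs1, hE⟩ := hengel a
  obtain ⟨t, rfl⟩ : ∃ t, s = t + 1 := ⟨s - 1, (Nat.succ_pred_eq_of_pos hs1).symm⟩
  have h := autEngel_main x r hx t a hE
  have h2 : a⁻¹ * x a = 1 := htf _ _ (pow_pos hrpos t) h
  exact (inv_mul_eq_one.mp h2).symm
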